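/- Let 0 < c₀ < 1/2 and let φ₀ : ℝ → ℝ solve φ' = 2c₀ − sin φ with φ₀(0) = π/2. Then φ₀ is strictly decreasing, φ₀(x) + φ₀(−x) = π for all x, and φ₀(x) → π − φ̄₀ as x → −∞ and φ₀(x) → φ̄₀ as x → +∞, where φ̄₀ ∈ (0, π/2) is the unique angle with sin φ̄₀ = 2c₀. -/

import Mathlib

open Filter Real Set in
/-- Global uniqueness for autonomous Lipschitz ODEs on ℝ. -/
lemma my_ode_unique {v : ℝ → ℝ} {K : NNReal} (hv : LipschitzWith K v)
    {f g : ℝ → ℝ} (hf : ∀ x, HasDerivAt f (v (f x)) x) (hg : ∀ x, HasDerivAt g (v (g x)) x)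
    {t₀ : ℝ} (h : f t₀ = g t₀) (x : ℝ) : f x = g x := by
  have ht : t₀ ∈ Ioo (min t₀ x - 1) (max t₀ x + 1) :=
    ⟨by linarith [min_le_left t₀ x], by linarith [le_max_left t₀ x]⟩
  refine ODE_solution_unique_of_mem_Icc (v := fun _ => v) (s := fun _ => Set.univ)
    (fun t _ => hv.lipschitzOnWith) ht
    (fun t _ => (hf t).continuousAt.continuousWithinAt)
    (fun t _ => hf t) (fun t _ => trivial)
    (fun t _ => (hg t).continuousAt.continuousWithinAt)
    (fun t _ => hg t) (fun t _ => trivial) h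
    ⟨by linarith [min_le_right t₀ x], by linarith [le_max_right t₀ x]⟩

open Filter Real in
theorem stmt_12 (c₀ : ℝ) (hc : 0 < c₀) (hc' : c₀ < 1 / 2)
    (φ₀ : ℝ → ℝ)
    (hode : ∀ x, HasDerivAt φ₀ (2 * c₀ - Real.sin (φ₀ x)) x)
    (h0 : φ₀ 0 = Real.pi / 2) :
    StrictAnti φ₀ ∧ (∀ x, φ₀ x + φ₀ (-x) = Real.pi) ∧
    Tendsto φ₀ atBot (nhds (Real.pi - Real.arcsin (2 * c₀))) ∧
    Tendsto φ₀ atTop (nhds (Real.arcsin (2 * c₀))) := by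
  have hpi := Real.pi_pos
  set φb := Real.arcsin (2 * c₀) with hφb
  have h2c1 : 2 * c₀ < 1 := by linarith
  have hsinb : Real.sin φb = 2 * c₀ := Real.sin_arcsin (by linarith) h2c1.le
  have hb0 : 0 < φb := Real.arcsin_pos.2 (by linarith)
  have hbpi : φb < Real.pi / 2 := Real.arcsin_lt_pi_div_two.2 h2c1
  have hlip : LipschitzWith 1 (fun y => 2 * c₀ - Real.sin y) := by
    apply lipschitzWith_of_nnnorm_deriv_le
      ((differentiable_const _).sub Real.differentiable_sin)
    intro x
    have hd : deriv (fun y => 2 * c₀ - Real.sin y) x = -Real.cos x := by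
      have : HasDerivAt (fun y => 2 * c₀ - Real.sin y) (-Real.cos x) x :=
        (Real.hasDerivAt_sin x).const_sub _
      exact this.deriv
    show ‖deriv (fun y => 2 * c₀ - Real.sin y) x‖₊ ≤ 1
    rw [hd, ← NNReal.coe_le_coe, coe_nnnorm, NNReal.coe_one, Real.norm_eq_abs, abs_neg]
    exact Real.abs_cos_le_one x
  have hcont : Continuous φ₀ :=
    continuous_iff_continuousAt.2 fun x => (hode x).continuousAt
  -- φ₀ never takes an equilibrium value
  have key : ∀ c : ℝ, Real.sin c = 2 * c₀ → ∀ x, φ₀ x ≠ c := by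
    intro c hcs x hx
    have hconst : ∀ t : ℝ, HasDerivAt (fun _ : ℝ => c)
        ((fun y => 2 * c₀ - Real.sin y) ((fun _ : ℝ => c) t)) t := by
      intro t
      simpa [hcs] using hasDerivAt_const t c
    have h00 : φ₀ 0 = c := my_ode_unique hlip hode hconst hx 0
    have : Real.sin (Real.pi / 2) = 2 * c₀ := by rw [h0] at h00; rw [h00, hcs]
    rw [Real.sin_pi_div_two] at this
    linarith
  -- bounds
  have hub : ∀ x, φ₀ x < Real.pi - φb := by
    intro x
    by_contra hle
    push_neg at hle
    have hmem : Real.pi - φb ∈ Set.uIcc (φ₀ 0) (φ₀ x) := by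
      rw [h0]
      exact Set.mem_uIcc.2 (Or.inl ⟨by linarith, hle⟩)
    obtain ⟨y, _, hy⟩ := intermediate_value_uIcc (a := 0) (b := x) hcont.continuousOn hmem
    exact key (Real.pi - φb) (by rw [Real.sin_pi_sub, hsinb]) y hy
  have hlb : ∀ x, φb < φ₀ x := by
    intro x
    by_contra hle
    push_neg at hle
    have hmem : φb ∈ Set.uIcc (φ₀ 0) (φ₀ x) := by
      rw [h0]
      exact Set.mem_uIcc.2 (Or.inr ⟨hle, by linarith⟩)
    obtain ⟨y, _, hy⟩ := intermediate_value_uIcc (a := 0) (b := x) hcont.continuousOn hmem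
    exact key φb hsinb y hy
  -- sin (φ₀ x) > 2 c₀
  have hsin : ∀ x, 2 * c₀ < Real.sin (φ₀ x) := by
    intro x
    have h1 := hlb x
    have h2 := hub x
    rcases le_total (φ₀ x) (Real.pi / 2) with h | h
    · rw [← hsinb]
      exact Real.strictMonoOn_sin ⟨by linarith, by linarith⟩ ⟨by linarith, h⟩ h1
    · rw [← Real.sin_pi_sub, ← hsinb]
      exact Real.strictMonoOn_sin ⟨by linarith, by linarith⟩ ⟨by linarith, by linarith⟩
        (by linarith)
  have hanti : StrictAnti φ₀ :=
    strictAnti_of_hasDerivAt_neg hode fun x => by linarith [hsin x]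
  -- symmetry
  have hsym : ∀ x, φ₀ x + φ₀ (-x) = Real.pi := by
    have hψ : ∀ x : ℝ, HasDerivAt (fun t => Real.pi - φ₀ (-t))
        ((fun y => 2 * c₀ - Real.sin y) ((fun t => Real.pi - φ₀ (-t)) x)) x := by
      intro x
      have h1 : HasDerivAt (fun t : ℝ => φ₀ (-t))
          ((2 * c₀ - Real.sin (φ₀ (-x))) * (-1)) x :=
        (hode (-x)).comp x (hasDerivAt_neg x)
      have h2 := h1.const_sub Real.pi
      refine h2.congr_deriv ?_
      simp only [Real.sin_pi_sub]
      ring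
    intro x
    have := my_ode_unique hlip hode hψ (t₀ := 0) (by rw [h0]; simp [h0]; ring) x
    linarith
  have hTop : Tendsto φ₀ atTop (nhds φb) := by
    have hbdd : BddBelow (Set.range φ₀) :=
      ⟨φb, by rintro y ⟨x, rfl⟩; exact (hlb x).le⟩
    have hT := tendsto_atTop_ciInf hanti.antitone hbdd
    have hLeq : (⨅ x, φ₀ x) = φb := by
      set L := ⨅ x, φ₀ x with hL
      have hLb : φb ≤ L := le_ciInf fun x => (hlb x).le
      have hL2 : L ≤ Real.pi / 2 := (ciInf_le hbdd 0).trans_eq h0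
      by_contra hne
      have hLgt : φb < L := hLb.lt_of_ne (Ne.symm hne)
      have hδ : 0 < Real.sin L - 2 * c₀ := by
        rw [← hsinb]
        have := Real.strictMonoOn_sin (a := φb) (b := L)
          ⟨by linarith, by linarith⟩ ⟨by linarith, hL2⟩ hLgt
        linarith
      set δ := Real.sin L - 2 * c₀ with hδdef
      have hmono : AntitoneOn (fun x => φ₀ x + δ * x) (Set.Ici 0) := by
        apply antitoneOn_of_hasDerivWithinAt_nonpos (convex_Ici 0)
          (f' := fun x => 2 * c₀ - Real.sin (φ₀ x) + δ)
          ((hcont.add (continuous_const.mul continuous_id)).continuousOn)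
        · intro x _
          exact (((hode x).add (((hasDerivAt_id x).const_mul δ).congr_deriv
            (by ring))).hasDerivWithinAt)
        · intro x hx
          rw [interior_Ici] at hx
          have h1 : L ≤ φ₀ x := ciInf_le hbdd x
          have h2 : φ₀ x ≤ Real.pi / 2 := h0 ▸ hanti.antitone (le_of_lt hx)
          have h3 : Real.sin L ≤ Real.sin (φ₀ x) :=
            Real.strictMonoOn_sin.monotoneOn ⟨by linarith, hL2⟩
              ⟨by linarith [hlb x], h2⟩ h1
          simp only [hδdef]
          linarith
      set x := (Real.pi / 2 - φb) / δ + 1 with hxdef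
      have hxpos : 0 < x := by
        have h7 : 0 < (Real.pi / 2 - φb) / δ := div_pos (by linarith) hδ
        rw [hxdef]
        linarith
      have h4 : φ₀ x + δ * x ≤ φ₀ 0 + δ * 0 :=
        hmono (Set.self_mem_Ici) (Set.mem_Ici.2 hxpos.le) hxpos.le
      have h5 : δ * x = (Real.pi / 2 - φb) + δ := by
        rw [hxdef, mul_add, mul_one, mul_div_cancel₀ _ (ne_of_gt hδ)]
      have h6 := hlb x
      rw [h0, h5] at h4
      linarith
    rw [hLeq] at hT
    exact hT
  refine ⟨hanti, hsym, ?_, hTop⟩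
  have h1 : Tendsto (fun x : ℝ => φ₀ (-x)) atBot (nhds φb) :=
    hTop.comp tendsto_neg_atBot_atTop
  have h2 : Tendsto (fun x : ℝ => Real.pi - φ₀ (-x)) atBot (nhds (Real.pi - φb)) :=
    tendsto_const_nhds.sub h1
  exact h2.congr fun x => by linarith [hsym x]
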